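/- Let 0 < ε < x and let F be the set of continuous functions f: [0,∞) → ℝ with f(0) = x such that, if σ_ε^f := inf{t : f(t) ≤ ε} is finite, then f does not have a local minimum at σ_ε^f. Then the map f ↦ σ_ε^f from D[0,∞) (with the Skorokhod J₁ topology) to [0,∞] is continuous at every f ∈ F. -/
import Mathlib


open Filter

/-- The entrance time `σ_ε^f = inf{t ≥ 0 : f(t) ≤ ε}` of `f` into `(-∞, ε]`, valued in
`[0,∞]` (with `inf ∅ = ∞`). -/
noncomputable def entranceTime (ε : ℝ) (f : ℝ → ℝ) : ENNReal :=
  sInf (ENNReal.ofReal '' {s : ℝ | 0 ≤ s ∧ f s ≤ ε})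

lemma entranceTime_le {ε : ℝ} {g : ℝ → ℝ} {s : ℝ} (hs : 0 ≤ s) (h : g s ≤ ε) :
    entranceTime ε g ≤ ENNReal.ofReal s :=
  sInf_le ⟨s, ⟨hs, h⟩, rfl⟩

lemma le_entranceTime {ε T : ℝ} {g : ℝ → ℝ}
    (h : ∀ t ∈ Set.Icc 0 T, ε < g t) :
    ENNReal.ofReal T ≤ entranceTime ε g := by
  refine le_sInf ?_
  rintro a ⟨s, ⟨hs0, hsε⟩, rfl⟩
  refine ENNReal.ofReal_le_ofReal ?_
  by_contra hlt
  push_neg at hlt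
  exact absurd hsε (not_le.mpr (h s ⟨hs0, le_of_lt hlt⟩))

lemma exists_gap {ε T : ℝ} {f : ℝ → ℝ} (hf : Continuous f) (hT : 0 ≤ T)
    (h : ∀ t ∈ Set.Icc 0 T, ε < f t) :
    ∃ c : ℝ, 0 < c ∧ ∀ t ∈ Set.Icc 0 T, ε + c ≤ f t := by
  obtain ⟨y, hy, hmin⟩ := (isCompact_Icc (a := (0:ℝ)) (b := T)).exists_isMinOn
    (Set.nonempty_Icc.mpr hT) hf.continuousOn
  refine ⟨f y - ε, by linarith [h y hy], fun t ht => ?_⟩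
  have h2 : f y ≤ f t := hmin ht
  linarith

/-- Continuity of the entrance time `f ↦ σ_ε^f` at a continuous `f` with `f(0) = x > ε`
having no local minimum at `σ_ε^f` (i.e. `f` dips strictly below `ε` in every right
neighborhood of `σ_ε^f`).  Since the limit `f` is continuous, Skorokhod `J₁` convergence
of `f_n` to `f` is equivalent to locally uniform convergence, which is how it is phrased
here; the conclusion is `σ_ε^{f_n} → σ_ε^f` in `[0,∞]`. -/
theorem entranceTime_continuous_at
    (ε x : ℝ) (hε : 0 < ε) (hεx : ε < x)
    (f : ℝ → ℝ) (hf : Continuous f) (hf0 : f 0 = x)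
    (hmin : entranceTime ε f ≠ ⊤ →
      ∀ η : ℝ, 0 < η → ∃ s : ℝ, (entranceTime ε f).toReal < s ∧
        s < (entranceTime ε f).toReal + η ∧ f s < ε)
    (fs : ℕ → ℝ → ℝ)
    (hconv : ∀ T : ℝ, TendstoUniformlyOn fs f atTop (Set.Icc 0 T)) :
    Tendsto (fun n => entranceTime ε (fs n)) atTop (nhds (entranceTime ε f)) := by
  rw [tendsto_order]
  constructor
  · intro b hb
    have hb' : b ≠ ⊤ := hb.ne_top
    -- find T with b.toReal < T and f > ε on [0,T]
    obtain ⟨T, hbT, hfp⟩ : ∃ T : ℝ, b.toReal < T ∧ ∀ t ∈ Set.Icc 0 T, ε < f t := by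
      by_cases hσ : entranceTime ε f = ⊤
      · refine ⟨b.toReal + 1, by linarith, fun t ht => ?_⟩
        by_contra hle
        push_neg at hle
        have h1 := entranceTime_le ht.1 hle
        rw [hσ] at h1
        exact (ENNReal.ofReal_lt_top.not_ge h1)
      · set σr := (entranceTime ε f).toReal with hσr
        have hbσ : b.toReal < σr := by
          refine (ENNReal.toReal_lt_toReal hb' hσ).mpr ?_
          exact hb
        refine ⟨(b.toReal + σr) / 2, by linarith, fun t ht => ?_⟩
        by_contra hle
        push_neg at hle
        have h1 := entranceTime_le ht.1 hle
        have h2 : ENNReal.ofReal t < entranceTime ε f := by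
          have : entranceTime ε f = ENNReal.ofReal σr := (ENNReal.ofReal_toReal hσ).symm
          rw [this]
          refine (ENNReal.ofReal_lt_ofReal_iff ?_).mpr ?_
          · linarith [ht.1, ENNReal.toReal_nonneg (a := b)]
          · linarith [ht.2]
        exact absurd (lt_of_le_of_lt h1 h2) (lt_irrefl _)
    have hT0 : 0 ≤ T := le_trans ENNReal.toReal_nonneg hbT.le
    obtain ⟨c, hc, hgap⟩ := exists_gap hf hT0 hfp
    filter_upwards [(Metric.tendstoUniformlyOn_iff.mp (hconv T)) c hc] with n hn
    have hle : ENNReal.ofReal T ≤ entranceTime ε (fs n) := by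
      refine le_entranceTime (fun t ht => ?_)
      have h1 := hn t ht
      have h2 := hgap t ht
      rw [Real.dist_eq, abs_sub_lt_iff] at h1
      linarith [h1.1, h1.2]
    refine lt_of_lt_of_le ?_ hle
    exact (ENNReal.lt_ofReal_iff_toReal_lt hb').mpr hbT
  · intro b hb
    have hσ : entranceTime ε f ≠ ⊤ := hb.ne_top
    set σr := (entranceTime ε f).toReal with hσr
    obtain ⟨s, hs1, hfs, hsb⟩ : ∃ s : ℝ, σr < s ∧ f s < ε ∧ ENNReal.ofReal s < b := by
      by_cases hbtop : b = ⊤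
      · obtain ⟨s, hs1, _, hs3⟩ := hmin hσ 1 one_pos
        exact ⟨s, hs1, hs3, by simp [hbtop]⟩
      · have hσb : σr < b.toReal := (ENNReal.toReal_lt_toReal hσ hbtop).mpr hb
        obtain ⟨s, hs1, hs2, hs3⟩ := hmin hσ (b.toReal - σr) (by linarith)
        refine ⟨s, hs1, hs3, ?_⟩
        rw [← ENNReal.ofReal_toReal hbtop]
        refine (ENNReal.ofReal_lt_ofReal_iff ?_).mpr (by linarith)
        linarith [ENNReal.toReal_nonneg (a := entranceTime ε f)]
    have hs0 : 0 ≤ s := le_trans ENNReal.toReal_nonneg hs1.le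
    have hptw : Tendsto (fun n => fs n s) atTop (nhds (f s)) :=
      (hconv s).tendsto_at ⟨hs0, le_refl s⟩
    filter_upwards [hptw.eventually_lt_const hfs] with n hn
    exact lt_of_le_of_lt (entranceTime_le hs0 hn.le) hsb
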